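/- Define g̃(ω) := (υ̂ − log(1 − exp(ω)))/β on [ω_min, ω_max]. Then g̃ is strictly increasing and strictly convex, g̃(ω_min) = ω_min, g̃(ω_max) = ω_max, and g̃(ω) < ω for every ω ∈ (ω_min, ω_max). -/

import Mathlib

open Real

/-- The map `g̃ ω = (υ̂ - log (1 - exp ω)) / β` on `[ω_min, ω_max]` is strictly
increasing and strictly convex, fixes the endpoints `ω_min = log (1-s)` and
`ω_max = log (1 - c_min)`, and satisfies `g̃ ω < ω` on the open interval. -/
theorem stmt_6 (β δ s cmin : ℝ)
    (hβ : β ∈ Set.Ioc (0 : ℝ) 1) (hδ : δ ∈ Set.Ioo (0 : ℝ) 1)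
    (hs1 : 1 / (1 + β) < s) (hs2 : s < 1)
    (hcmin : cmin ∈ Set.Ioo (0 : ℝ) s)
    (hcmineq : log cmin + β * log (1 - cmin) = log s + β * log (1 - s))
    (gt : ℝ → ℝ)
    (hgt : ∀ ω, gt ω = ((log s + β * log (1 - s)) - log (1 - exp ω)) / β) :
    StrictMonoOn gt (Set.Icc (log (1 - s)) (log (1 - cmin))) ∧
    StrictConvexOn ℝ (Set.Icc (log (1 - s)) (log (1 - cmin))) gt ∧
    gt (log (1 - s)) = log (1 - s) ∧
    gt (log (1 - cmin)) = log (1 - cmin) ∧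
    ∀ ω ∈ Set.Ioo (log (1 - s)) (log (1 - cmin)), gt ω < ω := by
  obtain ⟨hβ0, hβ1⟩ := hβ
  obtain ⟨hc0, hcs⟩ := hcmin
  have hgfun : gt = fun ω => ((log s + β * log (1 - s)) - log (1 - exp ω)) / β :=
    funext hgt
  subst hgfun
  set G : ℝ → ℝ := fun ω => ((log s + β * log (1 - s)) - log (1 - exp ω)) / β with hG
  have hs0 : 0 < s := lt_trans (by positivity) hs1
  have h1s : 0 < 1 - s := by linarith
  have h1c : 0 < 1 - cmin := by linarith
  set a := log (1 - s) with ha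
  set b := log (1 - cmin) with hb
  have hea : exp a = 1 - s := exp_log h1s
  have heb : exp b = 1 - cmin := exp_log h1c
  have hab : a < b := log_lt_log h1s (by linarith)
  have hpos : ∀ ω ∈ Set.Icc a b, 0 < 1 - exp ω := by
    intro ω hω
    have h2 : exp ω ≤ 1 - cmin := by rw [← heb]; exact exp_le_exp.2 hω.2
    linarith
  have hderiv : ∀ ω : ℝ, 0 < 1 - exp ω →
      HasDerivAt G (exp ω / ((1 - exp ω) * β)) ω := by
    intro ω h
    have h1 : HasDerivAt (fun ω : ℝ => 1 - exp ω) (-exp ω) ω := by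
      simpa using ((hasDerivAt_exp ω).const_sub 1)
    have h2 : HasDerivAt (fun ω : ℝ => log (1 - exp ω)) (-exp ω / (1 - exp ω)) ω :=
      h1.log (ne_of_gt h)
    have h3 := (h2.const_sub (log s + β * log (1 - s))).div_const β
    simp only [neg_div, neg_neg, div_div] at h3
    exact h3
  have hderiv' : ∀ ω : ℝ, 0 < 1 - exp ω →
      deriv G ω = exp ω / ((1 - exp ω) * β) := fun ω h => (hderiv ω h).deriv
  have hcont : ContinuousOn G (Set.Icc a b) :=
    fun x hx => ((hderiv x (hpos x hx)).continuousAt).continuousWithinAt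
  have hint : interior (Set.Icc a b) = Set.Ioo a b := interior_Icc
  have hmono : StrictMonoOn G (Set.Icc a b) := by
    apply strictMonoOn_of_deriv_pos (convex_Icc a b) hcont
    intro x hx
    rw [hint] at hx
    have hp := hpos x ⟨le_of_lt hx.1, le_of_lt hx.2⟩
    rw [hderiv' x hp]
    positivity
  have hconv : StrictConvexOn ℝ (Set.Icc a b) G := by
    apply StrictMonoOn.strictConvexOn_of_deriv (convex_Icc a b) hcont
    rw [hint]
    intro x hx y hy hxy
    have hpx := hpos x ⟨le_of_lt hx.1, le_of_lt hx.2⟩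
    have hpy := hpos y ⟨le_of_lt hy.1, le_of_lt hy.2⟩
    rw [hderiv' x hpx, hderiv' y hpy]
    rw [div_lt_div_iff₀ (by positivity) (by positivity)]
    have hexy : exp x < exp y := exp_lt_exp.2 hxy
    nlinarith [exp_pos x, exp_pos y]
  have hfa : G a = a := by
    have : (1 : ℝ) - exp a = s := by rw [hea]; ring
    rw [hG]
    simp only [this]
    field_simp
    ring
  have hfb : G b = b := by
    have : (1 : ℝ) - exp b = cmin := by rw [heb]; ring
    rw [hG]
    simp only [this]
    rw [div_eq_iff (ne_of_gt hβ0)]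
    linarith [hcmineq]
  refine ⟨hmono, hconv, hfa, hfb, ?_⟩
  intro ω hω
  set t := (b - ω) / (b - a) with ht
  have hba : 0 < b - a := by linarith [hab]
  have ht0 : 0 < t := by
    apply div_pos; linarith [hω.2]; exact hba
  have ht1 : 0 < 1 - t := by
    rw [ht]
    rw [sub_pos, div_lt_one hba]
    linarith [hω.1]
  have hcomb : t • a + (1 - t) • b = ω := by
    simp only [smul_eq_mul, ht]
    field_simp
    ring
  have := hconv.2 (Set.left_mem_Icc.2 (le_of_lt hab)) (Set.right_mem_Icc.2 (le_of_lt hab))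
    (ne_of_lt hab) ht0 ht1 (by ring)
  rw [hcomb, hfa, hfb] at this
  simp only [smul_eq_mul] at this
  calc G ω < t * a + (1 - t) * b := this
    _ = ω := by rw [← hcomb]; simp [smul_eq_mul]
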